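/- Let G be a finite group in which all proper subgroups are nilpotent but G itself is not nilpotent. Then G is soluble. -/

import Mathlib

open Subgroup

lemma schmidt_aux_norm {G : Type*} [Group G] (M D : Subgroup G)
    (hM : Group.IsNilpotent M) (hDM : D < M) :
    ∃ x : G, x ∈ M ∧ x ∉ D ∧ x ∈ Subgroup.normalizer (D : Set G) := by
  have hnc : NormalizerCondition M := @normalizerCondition_of_isNilpotent M _ hM
  have hD'top : D.subgroupOf M < ⊤ := by
    rw [lt_top_iff_ne_top]
    intro h
    obtain ⟨m, hmM, hmD⟩ := SetLike.exists_of_lt hDM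
    exact hmD (by simpa [Subgroup.mem_subgroupOf] using
      (h ▸ Subgroup.mem_top (⟨m, hmM⟩ : M) : (⟨m, hmM⟩ : M) ∈ D.subgroupOf M))
  obtain ⟨x', hx'n, hx'd⟩ := SetLike.exists_of_lt (hnc (D.subgroupOf M) hD'top)
  refine ⟨(x' : G), x'.2, ?_, ?_⟩
  · intro hx
    exact hx'd (by simpa [Subgroup.mem_subgroupOf] using hx)
  · rw [Subgroup.mem_normalizer_iff]
    intro h
    constructor
    · intro hh
      have hhM : h ∈ M := hDM.le hh
      have : (⟨h, hhM⟩ : M) ∈ D.subgroupOf M := by simpa [Subgroup.mem_subgroupOf] using hh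
      have := (Subgroup.mem_normalizer_iff.mp hx'n ⟨h, hhM⟩).mp this
      simpa [Subgroup.mem_subgroupOf] using this
    · intro hh
      have hhM' : (x' : G) * h * (x' : G)⁻¹ ∈ M := hDM.le hh
      have hhM : h ∈ M := by
        have := M.mul_mem (M.mul_mem (M.inv_mem x'.2) hhM') x'.2
        simpa [mul_assoc] using this
      have h1 : (⟨(x' : G) * h * (x' : G)⁻¹, hhM'⟩ : M) ∈ D.subgroupOf M := by
        simpa [Subgroup.mem_subgroupOf] using hh
      have h2 : x' * ⟨h, hhM⟩ * x'⁻¹ ∈ D.subgroupOf M := by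
        convert h1 using 1
        exact Subtype.ext rfl
      have := (Subgroup.mem_normalizer_iff.mp hx'n ⟨h, hhM⟩).mpr h2
      simpa [Subgroup.mem_subgroupOf] using this

lemma schmidt_card_lt {G : Type*} [Group G] [Finite G] {H K : Subgroup G} (h : H < K) :
    Nat.card H < Nat.card K := by
  have h1 : (H : Set G) ⊂ (K : Set G) := by
    rw [Set.ssubset_iff_of_subset (SetLike.coe_subset_coe.mpr h.le)]
    obtain ⟨x, hxK, hxH⟩ := SetLike.exists_of_lt h
    exact ⟨x, hxK, hxH⟩
  have := Set.ncard_lt_ncard h1 (Set.toFinite _)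
  rw [← Nat.card_coe_set_eq, ← Nat.card_coe_set_eq] at this
  exact this

lemma schmidt_map_equiv_coatom {G : Type*} [Group G] {M : Subgroup G} (h : IsCoatom M)
    (e : G ≃* G) : IsCoatom (M.map e.toMonoidHom) := by
  have hinj : Function.Injective e.toMonoidHom := e.injective
  have hsurj : Function.Surjective e.toMonoidHom := e.surjective
  constructor
  · intro htop
    apply h.1
    have := congrArg (Subgroup.comap e.toMonoidHom) htop
    rwa [Subgroup.comap_map_eq_self_of_injective hinj, Subgroup.comap_top] at this
  · intro K hK
    have h1 : M < Subgroup.comap e.toMonoidHom K := by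
      refine lt_of_le_of_ne ?_ ?_
      · rw [← Subgroup.comap_map_eq_self_of_injective hinj M]
        exact Subgroup.comap_mono hK.le
      · intro heq
        apply hK.ne
        rw [heq, Subgroup.map_comap_eq_self_of_surjective hsurj]
    have := h.2 _ h1
    have := congrArg (Subgroup.map e.toMonoidHom) this
    rwa [Subgroup.map_comap_eq_self_of_surjective hsurj, Subgroup.map_top_of_surjective _ hsurj] at this

lemma schmidt_card_map_conj {G : Type*} [Group G] (M : Subgroup G) (g : G) :
    Nat.card (M.map (MulAut.conj g).toMonoidHom) = Nat.card M := by
  exact (Nat.card_congr (M.equivMapOfInjective _ (MulAut.conj g).injective).toEquiv).symm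

lemma schmidt_finite_subgroups {G : Type*} [Group G] [Finite G] : Finite (Subgroup G) :=
  Finite.of_injective (fun H : Subgroup G => (H : Set G)) SetLike.coe_injective

lemma schmidt_TI {G : Type*} [Group G] [Finite G]
    (hprop : ∀ H : Subgroup G, H ≠ ⊤ → Group.IsNilpotent H)
    (hsimple : ∀ N : Subgroup G, N.Normal → N = ⊥ ∨ N = ⊤) :
    ∀ M1 M2 : Subgroup G, IsCoatom M1 → IsCoatom M2 → M1 ≠ M2 → M1 ⊓ M2 = ⊥ := by
  have : Finite (Subgroup G) := schmidt_finite_subgroups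
  have key : ∀ k : ℕ, ∀ M1 M2 : Subgroup G, IsCoatom M1 → IsCoatom M2 → M1 ≠ M2 →
      Nat.card G ≤ Nat.card (M1 ⊓ M2 : Subgroup G) + k → M1 ⊓ M2 = ⊥ := by
    intro k
    induction k using Nat.strong_induction_on with
    | _ k IH =>
    intro M1 M2 h1 h2 hne hcard
    by_contra hD
    set D := M1 ⊓ M2 with hDdef
    have hD1 : D < M1 := by
      refine lt_of_le_of_ne inf_le_left ?_
      intro heq
      have hle : M1 ≤ M2 := by rw [← heq]; exact inf_le_right
      rcases lt_or_eq_of_le hle with hlt | heq2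
      · exact absurd (h1.2 _ hlt) h2.1
      · exact hne heq2
    have hD2 : D < M2 := by
      refine lt_of_le_of_ne inf_le_right ?_
      intro heq
      have hle : M2 ≤ M1 := by rw [← heq]; exact inf_le_left
      rcases lt_or_eq_of_le hle with hlt | heq2
      · exact absurd (h2.2 _ hlt) h1.1
      · exact hne heq2.symm
    have hcardD1 : Nat.card D < Nat.card M1 := schmidt_card_lt hD1
    have hcardM1 : Nat.card M1 < Nat.card G := by
      have := schmidt_card_lt (lt_top_iff_ne_top.mpr h1.1)
      rwa [Subgroup.card_top] at this
    rcases k with _ | k'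
    · omega
    obtain ⟨x, hxM1, hxD, hxN⟩ := schmidt_aux_norm M1 D (hprop M1 h1.1) hD1
    obtain ⟨y, hyM2, hyD, hyN⟩ := schmidt_aux_norm M2 D (hprop M2 h2.1) hD2
    have hNtop : Subgroup.normalizer (D : Set G) ≠ ⊤ := by
      intro h
      rcases hsimple D (Subgroup.normalizer_eq_top_iff.mp h) with hb | ht
      · exact hD hb
      · exact h1.1 (top_le_iff.mp (ht ▸ inf_le_left : (⊤ : Subgroup G) ≤ M1))
    obtain ⟨M3, h3, hNM3⟩ :=
      (IsCoatomic.eq_top_or_exists_le_coatom (Subgroup.normalizer (D : Set G))).resolve_left hNtop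
    have step : ∀ Mi : Subgroup G, IsCoatom Mi → ∀ z : G, z ∈ Mi → z ∉ D → z ∈ Subgroup.normalizer (D : Set G) →
        D < Mi → Mi = M3 := by
      intro Mi hi z hzMi hzD hzN hDi
      by_contra hne3
      have hlt : D < Mi ⊓ M3 := by
        refine lt_of_le_of_ne (le_inf hDi.le (le_trans Subgroup.le_normalizer hNM3)) ?_
        intro heq
        exact hzD (heq ▸ (Subgroup.mem_inf.mpr ⟨hzMi, hNM3 hzN⟩))
      have hcc : Nat.card D < Nat.card (Mi ⊓ M3 : Subgroup G) := schmidt_card_lt hlt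
      have := IH k' (Nat.lt_succ_self k') Mi M3 hi h3 hne3 (by omega)
      rw [this] at hlt
      exact hD (le_bot_iff.mp hlt.le)
    have e1 : M1 = M3 := step M1 h1 x hxM1 hxD hxN hD1
    have e2 : M2 = M3 := step M2 h2 y hyM2 hyD hyN hD2
    exact hne (e1.trans e2.symm)
  intro M1 M2 h1 h2 hne
  exact key (Nat.card G) M1 M2 h1 h2 hne (Nat.le_add_left _ _)

lemma schmidt_conj_conj {G : Type*} [Group G] (M : Subgroup G) (a b : G) :
    (M.map (MulAut.conj b).toMonoidHom).map (MulAut.conj a).toMonoidHom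
      = M.map (MulAut.conj (a * b)).toMonoidHom := by
  ext x
  simp only [Subgroup.mem_map_equiv, MulAut.conj_symm_apply]
  have e : (a * b)⁻¹ * x * (a * b) = b⁻¹ * (a⁻¹ * x * a) * b := by group
  rw [e]

lemma schmidt_conj_mem_eq {G : Type*} [Group G] {M : Subgroup G} {m : G} (hm : m ∈ M) :
    M.map (MulAut.conj m).toMonoidHom = M := by
  ext x
  simp only [Subgroup.mem_map_equiv, MulAut.conj_symm_apply]
  constructor
  · intro h
    have h2 := M.mul_mem (M.mul_mem hm h) (M.inv_mem hm)
    have e : m * (m⁻¹ * x * m) * m⁻¹ = x := by group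
    rwa [e] at h2
  · intro h
    exact M.mul_mem (M.mul_mem (M.inv_mem hm) h) hm

lemma schmidt_mem_norm_of_conj {G : Type*} [Group G] {M : Subgroup G} {g : G}
    (h : M.map (MulAut.conj g).toMonoidHom = M) : g ∈ Subgroup.normalizer (M : Set G) := by
  rw [Subgroup.mem_normalizer_iff]
  intro x
  constructor
  · intro hx
    rw [← h]
    exact ⟨x, hx, rfl⟩
  · intro hx
    rw [← h] at hx
    obtain ⟨y, hy, hxy⟩ := hx
    have : y = x := by
      have : g * y * g⁻¹ = g * x * g⁻¹ := hxy
      group at this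
      exact mul_left_cancel (mul_right_cancel this)
    exact this ▸ hy

lemma schmidt_count {G : Type*} [Group G] [Finite G] (M : Subgroup G) (hM : IsCoatom M)
    (hnorm : Subgroup.normalizer (M : Set G) = M)
    (hTI : ∀ M1 M2 : Subgroup G, IsCoatom M1 → IsCoatom M2 → M1 ≠ M2 → M1 ⊓ M2 = ⊥) :
    Set.ncard {x : G | x ≠ 1 ∧ ∃ g : G, x ∈ M.map (MulAut.conj g).toMonoidHom}
      = Nat.card G - M.index := by
  classical
  letI := Fintype.ofFinite G
  letI : Fintype (Subgroup G) := Fintype.ofFinite _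
  letI := Fintype.ofFinite (G ⧸ M)
  -- the conjugation-orbit map from the coset space
  have hwd : ∀ a b : G, @Setoid.r G (QuotientGroup.leftRel M) a b →
      M.map (MulAut.conj a).toMonoidHom = M.map (MulAut.conj b).toMonoidHom := by
    intro a b hab
    have hm : a⁻¹ * b ∈ M := QuotientGroup.leftRel_apply.mp hab
    have : b = a * (a⁻¹ * b) := by group
    rw [this, ← schmidt_conj_conj, schmidt_conj_mem_eq hm]
  let f : G ⧸ M → Subgroup G := fun q =>
    Quotient.liftOn' q (fun g => M.map (MulAut.conj g).toMonoidHom) hwd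
  have hf_mk : ∀ g : G, f (QuotientGroup.mk g) = M.map (MulAut.conj g).toMonoidHom :=
    fun g => rfl
  have hfinj : Function.Injective f := by
    intro q1 q2 h
    induction q1 using Quotient.inductionOn' with | h a => ?_
    induction q2 using Quotient.inductionOn' with | h b => ?_
    rw [show (Quotient.mk'' a : G ⧸ M) = QuotientGroup.mk a from rfl,
      show (Quotient.mk'' b : G ⧸ M) = QuotientGroup.mk b from rfl, hf_mk, hf_mk] at h
    have h2 : M.map (MulAut.conj (b⁻¹ * a)).toMonoidHom = M := by
      rw [← schmidt_conj_conj, h, schmidt_conj_conj]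
      have : b⁻¹ * b = 1 := by group
      rw [this]
      ext x
      simp [Subgroup.mem_map_equiv]
    have : b⁻¹ * a ∈ M := hnorm ▸ schmidt_mem_norm_of_conj h2
    exact Quotient.sound' (QuotientGroup.leftRel_apply.mpr (by simpa using M.inv_mem this))
  let O : Finset (Subgroup G) := Finset.univ.image f
  have hOcard : O.card = M.index := by
    rw [Finset.card_image_of_injective _ hfinj, Subgroup.index_eq_card,
      Nat.card_eq_fintype_card, Finset.card_univ]
  have hOconj : ∀ K ∈ O, ∃ g : G, K = M.map (MulAut.conj g).toMonoidHom := by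
    intro K hK
    obtain ⟨q, _, rfl⟩ := Finset.mem_image.mp hK
    induction q using Quotient.inductionOn' with | h g =>
    exact ⟨g, (hf_mk g).symm⟩
  have hOcoatom : ∀ K ∈ O, IsCoatom K := by
    intro K hK
    obtain ⟨g, rfl⟩ := hOconj K hK
    exact schmidt_map_equiv_coatom hM _
  have hOcardK : ∀ K ∈ O, Nat.card K = Nat.card M := by
    intro K hK
    obtain ⟨g, rfl⟩ := hOconj K hK
    exact schmidt_card_map_conj M g
  -- the union
  let S : Finset G := O.biUnion (fun K => Finset.univ.filter (fun x => x ∈ K ∧ x ≠ 1))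
  have hScard : S.card = M.index * (Nat.card M - 1) := by
    rw [Finset.card_biUnion, ← hOcard]
    · rw [Finset.sum_congr rfl (g := fun _ => Nat.card M - 1)]
      · rw [Finset.sum_const, smul_eq_mul]
      · intro K hK
        have h1K : (1 : G) ∈ K := K.one_mem
        have : Finset.univ.filter (fun x => x ∈ K ∧ x ≠ 1)
            = (Finset.univ.filter (fun x => x ∈ K)).erase 1 := by
          ext x
          simp [Finset.mem_erase, and_comm]
        rw [this, Finset.card_erase_of_mem (by simp [h1K]), ← hOcardK K hK,
          Nat.card_eq_fintype_card, Fintype.card_subtype]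
    · intro K1 h1 K2 h2 hne
      rw [Function.onFun, Finset.disjoint_left]
      intro x hx1 hx2
      simp only [Finset.mem_filter] at hx1 hx2
      have := hTI K1 K2 (hOcoatom _ h1) (hOcoatom _ h2) hne
      exact hx1.2.2 ((Subgroup.mem_bot).mp (this ▸ Subgroup.mem_inf.mpr ⟨hx1.2.1, hx2.2.1⟩))
  have hSset : {x : G | x ≠ 1 ∧ ∃ g : G, x ∈ M.map (MulAut.conj g).toMonoidHom} = (S : Set G) := by
    ext x
    simp only [Set.mem_setOf_eq, Finset.mem_coe, Finset.mem_biUnion, S]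
    constructor
    · rintro ⟨hx1, g, hxg⟩
      refine ⟨M.map (MulAut.conj g).toMonoidHom, ?_, Finset.mem_filter.mpr ⟨Finset.mem_univ x, hxg, hx1⟩⟩
      exact Finset.mem_image.mpr ⟨QuotientGroup.mk g, Finset.mem_univ _, hf_mk g⟩
    · rintro ⟨K, hK, hxK⟩
      simp only [Finset.mem_filter] at hxK
      obtain ⟨g, rfl⟩ := hOconj K hK
      exact ⟨hxK.2.2, g, hxK.2.1⟩
  rw [hSset, Set.ncard_coe_finset, hScard]
  rw [Nat.mul_sub, mul_one, M.index_mul_card]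

lemma schmidt_not_simple {G : Type*} [Group G] [Finite G]
    (hprop : ∀ H : Subgroup G, H ≠ ⊤ → Group.IsNilpotent H)
    (hnotnil : ¬ Group.IsNilpotent G) :
    ∃ N : Subgroup G, N.Normal ∧ N ≠ ⊥ ∧ N ≠ ⊤ := by
  classical
  by_contra hcon
  push_neg at hcon
  have hsimple : ∀ N : Subgroup G, N.Normal → N = ⊥ ∨ N = ⊤ := by
    intro N hN
    by_cases hb : N = ⊥
    · exact Or.inl hb
    · exact Or.inr (hcon N hN hb)
  have hTI := schmidt_TI hprop hsimple
  have hnontriv : Nontrivial G := by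
    by_contra h
    rw [not_nontrivial_iff_subsingleton] at h
    exact hnotnil (@Group.isNilpotent_of_subsingleton G _ h)
  have hnotcyc : ∀ g : G, Subgroup.zpowers g ≠ ⊤ := by
    intro g hg
    have : IsCyclic G := ⟨⟨g, Subgroup.eq_top_iff' _ |>.mp hg⟩⟩
    exact hnotnil (letI := IsCyclic.commGroup (α := G); inferInstance)
  have hcoatom_ne_bot : ∀ M : Subgroup G, IsCoatom M → M ≠ ⊥ := by
    intro M hM h
    obtain ⟨g, hg⟩ := exists_ne (1 : G)
    have h1 : M < Subgroup.zpowers g := by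
      rw [h, bot_lt_iff_ne_bot, Ne, Subgroup.zpowers_eq_bot]
      exact hg
    exact hnotcyc g (hM.2 _ h1)
  have hselfnorm : ∀ M : Subgroup G, IsCoatom M → Subgroup.normalizer (M : Set G) = M := by
    intro M hM
    by_contra h
    have hlt : M < Subgroup.normalizer (M : Set G) := lt_of_le_of_ne Subgroup.le_normalizer (Ne.symm h)
    have htn : Subgroup.normalizer (M : Set G) = ⊤ := hM.2 _ hlt
    rcases hsimple M (Subgroup.normalizer_eq_top_iff.mp htn) with hb | ht
    · exact hcoatom_ne_bot M hM hb
    · exact hM.1 ht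
  have : Finite (Subgroup G) := schmidt_finite_subgroups
  set n := Nat.card G with hn
  have hn2 : 2 ≤ n := Finite.one_lt_card_iff_nontrivial.mpr hnontriv
  have hfacts : ∀ M : Subgroup G, IsCoatom M → 2 ≤ M.index ∧ 2 * M.index ≤ n := by
    intro M hM
    have hidx : 1 < M.index := Subgroup.one_lt_index_of_ne_top hM.1
    have hcard : 1 < Nat.card M := (Subgroup.one_lt_card_iff_ne_bot (H := M)).mpr (hcoatom_ne_bot M hM)
    have hmul := M.index_mul_card
    refine ⟨hidx, ?_⟩
    calc 2 * M.index = M.index * 2 := mul_comm _ _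
      _ ≤ M.index * Nat.card M := Nat.mul_le_mul_left _ hcard
      _ = n := hmul
  have hcard1 : Set.ncard {x : G | x ≠ 1} = n - 1 := by
    have he : {x : G | x ≠ 1} = Set.univ \ {1} := by ext; simp
    rw [he, Set.ncard_diff (by simp), Set.ncard_univ, Set.ncard_singleton]
  obtain ⟨M1, hM1, -⟩ := (IsCoatomic.eq_top_or_exists_le_coatom (⊥ : Subgroup G)).resolve_left
    (by
      intro h
      obtain ⟨g, hg⟩ := exists_ne (1 : G)
      exact hg (Subgroup.mem_bot.mp (h ▸ Subgroup.mem_top g)))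
  have hC1 := schmidt_count M1 hM1 (hselfnorm M1 hM1) hTI
  set C1 := {x : G | x ≠ 1 ∧ ∃ g : G, x ∈ M1.map (MulAut.conj g).toMonoidHom} with hC1def
  have hexists : ∃ y : G, y ≠ 1 ∧ y ∉ C1 := by
    by_contra h
    push_neg at h
    have hsub : {x : G | x ≠ 1} ⊆ C1 := fun x hx => h x hx
    have hle := Set.ncard_le_ncard hsub (Set.toFinite _)
    rw [hcard1, hC1] at hle
    have := (hfacts M1 hM1).1
    omega
  obtain ⟨y, hy1, hyC1⟩ := hexists
  obtain ⟨M2, hM2, hyM2'⟩ :=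
    (IsCoatomic.eq_top_or_exists_le_coatom (Subgroup.zpowers y)).resolve_left (hnotcyc y)
  have hyM2 : y ∈ M2 := hyM2' (Subgroup.mem_zpowers y)
  have hC2 := schmidt_count M2 hM2 (hselfnorm M2 hM2) hTI
  set C2 := {x : G | x ≠ 1 ∧ ∃ g : G, x ∈ M2.map (MulAut.conj g).toMonoidHom} with hC2def
  have hdisj : Disjoint C1 C2 := by
    rw [Set.disjoint_left]
    rintro x ⟨hx1, g, hxg⟩ ⟨-, g', hxg'⟩
    have hKne : M1.map (MulAut.conj g).toMonoidHom ≠ M2.map (MulAut.conj g').toMonoidHom := by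
      intro heq
      apply hyC1
      have hM2eq : M2 = M1.map (MulAut.conj (g'⁻¹ * g)).toMonoidHom := by
        symm
        rw [← schmidt_conj_conj, heq, schmidt_conj_conj, inv_mul_cancel,
          schmidt_conj_mem_eq (M2.one_mem)]
      exact ⟨hy1, g'⁻¹ * g, hM2eq ▸ hyM2⟩
    have hbot := hTI _ _ (schmidt_map_equiv_coatom hM1 _) (schmidt_map_equiv_coatom hM2 _) hKne
    exact hx1 (Subgroup.mem_bot.mp (hbot ▸ Subgroup.mem_inf.mpr ⟨hxg, hxg'⟩))
  have hU : Set.ncard (C1 ∪ C2) = (n - M1.index) + (n - M2.index) := by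
    rw [Set.ncard_union_eq hdisj (Set.toFinite _) (Set.toFinite _), hC1, hC2]
  have hsubU : C1 ∪ C2 ⊆ {x : G | x ≠ 1} := by
    rintro x (⟨hx1, -⟩ | ⟨hx1, -⟩) <;> exact hx1
  have hle := Set.ncard_le_ncard hsubU (Set.toFinite _)
  rw [hU, hcard1] at hle
  obtain ⟨h1a, h1b⟩ := hfacts M1 hM1
  obtain ⟨h2a, h2b⟩ := hfacts M2 hM2
  omega

universe u

lemma schmidt_main : ∀ n : ℕ, ∀ (G : Type u) [Group G] [Finite G], Nat.card G ≤ n →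
    (∀ H : Subgroup G, H ≠ ⊤ → Group.IsNilpotent H) → IsSolvable G := by
  intro n
  induction n using Nat.strong_induction_on with
  | _ n IH =>
  intro G _ _ hle hprop
  by_cases hnil : Group.IsNilpotent G
  · exact @IsNilpotent.to_isSolvable G _ hnil
  obtain ⟨N, hNnormal, hNbot, hNtop⟩ := schmidt_not_simple hprop hnil
  haveI := hNnormal
  haveI hNsol : Group.IsSolvable N := @IsNilpotent.to_isSolvable N _ (hprop N hNtop)
  have hsurj : Function.Surjective (QuotientGroup.mk' N) := QuotientGroup.mk'_surjective N
  have hQprop : ∀ K : Subgroup (G ⧸ N), K ≠ ⊤ → Group.IsNilpotent K := by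
    intro K hK
    have hcom : Subgroup.comap (QuotientGroup.mk' N) K ≠ ⊤ := by
      intro h
      apply hK
      have := congrArg (Subgroup.map (QuotientGroup.mk' N)) h
      rwa [Subgroup.map_comap_eq_self_of_surjective hsurj,
        Subgroup.map_top_of_surjective _ hsurj] at this
    have hmap : (Subgroup.comap (QuotientGroup.mk' N) K).map (QuotientGroup.mk' N) = K :=
      Subgroup.map_comap_eq_self_of_surjective hsurj K
    rw [← hmap]
    exact @nilpotent_of_surjective _ _ _ _ (hprop _ hcom) _
      (MonoidHom.subgroupMap_surjective _ _)
  have hcardN : 1 < Nat.card N := (Subgroup.one_lt_card_iff_ne_bot (H := N)).mpr hNbot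
  have hidx0 : 0 < N.index := Nat.pos_of_ne_zero Subgroup.index_ne_zero_of_finite
  have hcardQ : Nat.card (G ⧸ N) < Nat.card G := by
    rw [← Subgroup.index_eq_card, ← N.index_mul_card]
    calc N.index = N.index * 1 := (mul_one _).symm
      _ < N.index * Nat.card N := (Nat.mul_lt_mul_left hidx0).mpr hcardN
  haveI hQsol : Group.IsSolvable (G ⧸ N) :=
    IH (Nat.card (G ⧸ N)) (lt_of_lt_of_le hcardQ hle) (G ⧸ N) le_rfl hQprop
  refine solvable_of_ker_le_range N.subtype (QuotientGroup.mk' N) ?_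
  rw [QuotientGroup.ker_mk', Subgroup.range_subtype]

/-- Schmidt's theorem: a finite group all of whose proper subgroups are nilpotent,
but which is itself not nilpotent, is soluble. -/
theorem schmidt_solvable (G : Type*) [Group G] [Finite G]
    (hprop : ∀ H : Subgroup G, H ≠ ⊤ → Group.IsNilpotent H)
    (hnotnil : ¬ Group.IsNilpotent G) :
    IsSolvable G := by
  exact schmidt_main (Nat.card G) G le_rfl hprop
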